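/- Suppose tolls τ have been mapped to a labeling (L, Δ) with L = min over s-t paths P of α(P) and Δ_H = (min over paths in H_L of α) − (min over paths in H_R of α) for each parallel-join subgraph H, where α are canonical tolls equal to τ on all path sums. Then the reconstruction procedure—initializing β = 0, traversing parallel-join subgraphs bottom-up and adding max(0, Δ_H) to edges of H_L leaving s_H and max(0, −Δ_H) to edges of H_R leaving s_H, and finally adding L to all edges leaving s—recovers exactly β = α. -/

import Mathlib

/-- Two-terminal series-parallel graphs, given by their binary decomposition tree. -/
inductive SPG : Type
  | edge : SPG
  | series : SPG → SPG → SPG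
  | parallel : SPG → SPG → SPG

namespace SPG

/-- The edge set of a series-parallel graph (the leaves of the decomposition tree). -/
def E : SPG → Type
  | .edge => Unit
  | .series a b => a.E ⊕ b.E
  | .parallel a b => a.E ⊕ b.E

/-- The `s`-`t` paths of a series-parallel graph. -/
def Path : SPG → Type
  | .edge => Unit
  | .series a b => a.Path × b.Path
  | .parallel a b => a.Path ⊕ b.Path

/-- The cost `c(P) = Σ_{e ∈ P} c_e` of a path under edge costs `c`. -/
def pathCost : (G : SPG) → (G.E → ℝ) → G.Path → ℝ
  | .edge, c, _ => c ()
  | .series a b, c, P => a.pathCost (c ∘ Sum.inl) P.1 + b.pathCost (c ∘ Sum.inr) P.2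
  | .parallel a _, c, .inl P => a.pathCost (c ∘ Sum.inl) P
  | .parallel _ b, c, .inr P => b.pathCost (c ∘ Sum.inr) P

/-- The minimum of `c(P)` over all `s`-`t` paths `P` of `G`. -/
def minPathCost : (G : SPG) → (G.E → ℝ) → ℝ
  | .edge, c => c ()
  | .series a b, c => a.minPathCost (c ∘ Sum.inl) + b.minPathCost (c ∘ Sum.inr)
  | .parallel a b, c => min (a.minPathCost (c ∘ Sum.inl)) (b.minPathCost (c ∘ Sum.inr))

/-- `e` is an edge leaving the source terminal of `G`. -/
def isSourceEdge : (G : SPG) → G.E → Prop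
  | .edge, _ => True
  | .series a _, e => match e with
      | .inl e => a.isSourceEdge e
      | .inr _ => False
  | .parallel a b, e => match e with
      | .inl e => a.isSourceEdge e
      | .inr e => b.isSourceEdge e

/-- Canonical tolls: for every subgraph `H` of the decomposition tree and every edge
`e` leaving the source terminal `s_H` of `H`, `α_e ≥ min_{P ∈ 𝒫(H)} α(P)`. -/
def Canonical : (G : SPG) → (G.E → ℝ) → Prop
  | .edge, _ => True
  | .series a b, τ =>
      (∀ e, a.isSourceEdge e →
        a.minPathCost (τ ∘ Sum.inl) + b.minPathCost (τ ∘ Sum.inr) ≤ τ (Sum.inl e)) ∧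
      a.Canonical (τ ∘ Sum.inl) ∧ b.Canonical (τ ∘ Sum.inr)
  | .parallel a b, τ =>
      (∀ e, a.isSourceEdge e →
        min (a.minPathCost (τ ∘ Sum.inl)) (b.minPathCost (τ ∘ Sum.inr)) ≤ τ (Sum.inl e)) ∧
      (∀ e, b.isSourceEdge e →
        min (a.minPathCost (τ ∘ Sum.inl)) (b.minPathCost (τ ∘ Sum.inr)) ≤ τ (Sum.inr e)) ∧
      a.Canonical (τ ∘ Sum.inl) ∧ b.Canonical (τ ∘ Sum.inr)

end SPG

namespace SPG

/-- Add the constant `c` to the toll of every edge leaving the source terminal of `G`. -/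
def addToSource : (G : SPG) → ℝ → (G.E → ℝ) → (G.E → ℝ)
  | .edge, c, β => fun _ => β () + c
  | .series a _, c, β => Sum.elim (a.addToSource c (β ∘ Sum.inl)) (β ∘ Sum.inr)
  | .parallel a b, c, β =>
      Sum.elim (a.addToSource c (β ∘ Sum.inl)) (b.addToSource c (β ∘ Sum.inr))

/-- The reconstruction procedure (steps M1–M2) applied to the labeling `Δ` obtained
from canonical tolls `α`: starting from the zero tolls, traverse the parallel-join
subgraphs bottom-up; at a parallel join `H` of left part `H_L` and right part `H_R`,
with label `Δ_H = min_{P ∈ 𝒫(H_L)} α(P) − min_{P ∈ 𝒫(H_R)} α(P)`, add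
`max(0, Δ_H)` to the edges of `H_L` leaving `s_H` and `max(0, −Δ_H)` to the edges of
`H_R` leaving `s_H`. -/
def recon0 : (G : SPG) → (G.E → ℝ) → (G.E → ℝ)
  | .edge, _ => fun _ => 0
  | .series a b, α => Sum.elim (a.recon0 (α ∘ Sum.inl)) (b.recon0 (α ∘ Sum.inr))
  | .parallel a b, α =>
      Sum.elim
        (a.addToSource (max 0 (a.minPathCost (α ∘ Sum.inl) - b.minPathCost (α ∘ Sum.inr)))
          (a.recon0 (α ∘ Sum.inl)))
        (b.addToSource (max 0 (-(a.minPathCost (α ∘ Sum.inl) - b.minPathCost (α ∘ Sum.inr))))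
          (b.recon0 (α ∘ Sum.inr)))

end SPG

namespace SPG

theorem minPathCost_nonneg : ∀ (G : SPG) (α : G.E → ℝ), (∀ e, 0 ≤ α e) →
    0 ≤ G.minPathCost α
  | .edge, α, h => h ()
  | .series a b, α, h => by
      simpa [minPathCost] using add_nonneg
        (minPathCost_nonneg a (α ∘ Sum.inl) (fun e => h _))
        (minPathCost_nonneg b (α ∘ Sum.inr) (fun e => h _))
  | .parallel a b, α, h => by
      simpa [minPathCost] using le_min
        (minPathCost_nonneg a (α ∘ Sum.inl) (fun e => h _))
        (minPathCost_nonneg b (α ∘ Sum.inr) (fun e => h _))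

theorem le_minPathCost_of_source : ∀ (G : SPG) (α : G.E → ℝ) (c : ℝ),
    (∀ e, 0 ≤ α e) → (∀ e, G.isSourceEdge e → c ≤ α e) → c ≤ G.minPathCost α
  | .edge, α, c, _, hs => hs () trivial
  | .series a b, α, c, h, hs => by
      have h1 : c ≤ a.minPathCost (α ∘ Sum.inl) :=
        le_minPathCost_of_source a _ c (fun e => h _) (fun e he => hs (Sum.inl e) he)
      have h2 : 0 ≤ b.minPathCost (α ∘ Sum.inr) :=
        minPathCost_nonneg b _ (fun e => h _)
      simpa [minPathCost] using by linarith
  | .parallel a b, α, c, h, hs => by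
      have h1 : c ≤ a.minPathCost (α ∘ Sum.inl) :=
        le_minPathCost_of_source a _ c (fun e => h _) (fun e he => hs (Sum.inl e) he)
      have h2 : c ≤ b.minPathCost (α ∘ Sum.inr) :=
        le_minPathCost_of_source b _ c (fun e => h _) (fun e he => hs (Sum.inr e) he)
      simpa [minPathCost] using le_min h1 h2

theorem addToSource_addToSource : ∀ (G : SPG) (c d : ℝ) (β : G.E → ℝ),
    G.addToSource c (G.addToSource d β) = G.addToSource (d + c) β
  | .edge, c, d, β => by
      funext e; simp [addToSource]; ring
  | .series a b, c, d, β => by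
      funext e
      cases e with
      | inl e => exact congrFun (addToSource_addToSource a c d (β ∘ Sum.inl)) e
      | inr e => simp [addToSource]; rfl
  | .parallel a b, c, d, β => by
      funext e
      cases e with
      | inl e => exact congrFun (addToSource_addToSource a c d (β ∘ Sum.inl)) e
      | inr e => exact congrFun (addToSource_addToSource b c d (β ∘ Sum.inr)) e

theorem addToSource_zero : ∀ (G : SPG) (β : G.E → ℝ), G.addToSource 0 β = β
  | .edge, β => by funext e; cases e; simp [addToSource]
  | .series a b, β => by
      have := addToSource_zero a (β ∘ Sum.inl)
      funext e; cases e <;> simp [addToSource, this] <;> rfl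
  | .parallel a b, β => by
      have h1 := addToSource_zero a (β ∘ Sum.inl)
      have h2 := addToSource_zero b (β ∘ Sum.inr)
      funext e; cases e <;> simp [addToSource, h1, h2] <;> rfl

end SPG

/-- Lemma 4.4: mapping nonnegative canonical tolls `α` to the labeling
`(L, Δ)` with `L = min_{P ∈ 𝒫} α(P)` and `Δ_H = min_{𝒫(H_L)} α − min_{𝒫(H_R)} α`
and then running the reconstruction procedure (steps M1–M3: bottom-up additions of
`max(0, Δ_H)` / `max(0, −Δ_H)` at parallel joins, followed by adding `L` to the
edges leaving the global source) recovers exactly `α`. -/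
theorem spg_labeling_reconstruction (G : SPG) (α : G.E → ℝ)
    (hα : ∀ e, 0 ≤ α e) (hcan : G.Canonical α) :
    G.addToSource (G.minPathCost α) (G.recon0 α) = α := by
  induction G with
  | edge =>
      funext e; cases e; simp [SPG.addToSource, SPG.recon0, SPG.minPathCost]
  | series a b iha ihb =>
      obtain ⟨hsrc, hca, hcb⟩ := hcan
      have hαa : ∀ e, 0 ≤ (α ∘ Sum.inl) e := fun e => hα _
      have hαb : ∀ e, 0 ≤ (α ∘ Sum.inr) e := fun e => hα _
      set mA := a.minPathCost (α ∘ Sum.inl) with hmA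
      set mB := b.minPathCost (α ∘ Sum.inr) with hmB
      -- the minimum toll over the second part is 0
      have hB0 : mB = 0 := by
        have h1 : mA + mB ≤ mA :=
          SPG.le_minPathCost_of_source a (α ∘ Sum.inl) (mA + mB) hαa
            (fun e he => hsrc e he)
        have h2 : 0 ≤ mB := SPG.minPathCost_nonneg b _ hαb
        linarith
      have ha : a.addToSource mA (a.recon0 (α ∘ Sum.inl)) = α ∘ Sum.inl := iha _ hαa hca
      have hb : b.addToSource mB (b.recon0 (α ∘ Sum.inr)) = α ∘ Sum.inr := ihb _ hαb hcb
      funext e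
      cases e with
      | inl e =>
          have : (SPG.series a b).minPathCost α = mA := by
            simp [SPG.minPathCost, ← hmA, ← hmB, hB0]
          rw [this]
          exact congrFun ha e
      | inr e =>
          rw [hB0, SPG.addToSource_zero] at hb
          exact congrFun hb e
  | parallel a b iha ihb =>
      obtain ⟨hsa, hsb, hca, hcb⟩ := hcan
      have hαa : ∀ e, 0 ≤ (α ∘ Sum.inl) e := fun e => hα _
      have hαb : ∀ e, 0 ≤ (α ∘ Sum.inr) e := fun e => hα _
      set mA := a.minPathCost (α ∘ Sum.inl) with hmA
      set mB := b.minPathCost (α ∘ Sum.inr) with hmB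
      have ha := iha _ hαa hca
      have hb := ihb _ hαb hcb
      have key1 : max 0 (mA - mB) + min mA mB = mA := by
        rcases le_total mA mB with h | h
        · simp [max_eq_left, min_eq_left h, sub_nonpos.mpr h]
        · rw [min_eq_right h, max_eq_right (by linarith)]; ring
      have key2 : max 0 (-(mA - mB)) + min mA mB = mB := by
        rcases le_total mA mB with h | h
        · rw [min_eq_left h, max_eq_right (by linarith)]; ring
        · rw [min_eq_right h, max_eq_left (by linarith)]; ring
      funext e
      cases e with
      | inl e =>
          show a.addToSource (min mA mB)
              (a.addToSource (max 0 (mA - mB)) (a.recon0 (α ∘ Sum.inl))) e = α (Sum.inl e)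
          rw [SPG.addToSource_addToSource, key1]
          exact congrFun ha e
      | inr e =>
          show b.addToSource (min mA mB)
              (b.addToSource (max 0 (-(mA - mB))) (b.recon0 (α ∘ Sum.inr))) e = α (Sum.inr e)
          rw [SPG.addToSource_addToSource, key2]
          exact congrFun hb e
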